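/- Let W be the k-vector space with basis {e_{(a,b)}} indexed by pairs of functions a, b : {1,…,m} → {0,1,…,ℓ−1}. Define k-linear maps x_i and γ_i on W by: x_i(e_{(a,b)}) = e_{(a+ε_i, b)} if a_i ≤ ℓ−2 and x_i(e_{(a,b)}) = 0 if a_i = ℓ−1; and γ_i(e_{(a,b)}) = q^{a_i} · e_{(a, b+ε_i)}, where ε_i is the i-th standard unit vector and the addition b+ε_i is taken modulo ℓ. (These maps form a quantum elementary abelian module structure of rank m on W; W is the left regular representation of the algebra A = Λ ⋊ G.) Then for every nonzero λ = (λ_1,…,λ_m) ∈ k^m, the operator τ_λ = λ_1·(x_1∘h_1) + ⋯ + λ_m·(x_m∘h_m) satisfies dim_k ker(τ_λ) = ℓ^{2m−1}; equivalently, W is a free module of rank ℓ^{2m−1} over k[t]/(t^ℓ) with t acting as τ_λ. (This is the freeness assertion of Lemma 2.2: A is free as a module over the subalgebra k⟨τ_λ(t)⟩.) -/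

import Mathlib

/-- The index set for the standard basis of the regular representation `W` of
`A = Λ ⋊ G`: pairs of functions `a, b : {1,…,m} → {0,…,ℓ−1}`. -/
abbrev QEAIdx (m ℓ : ℕ) := (Fin m → Fin ℓ) × (Fin m → Fin ℓ)

/-- The `k`-vector space `W` with basis `e_{(a,b)}` indexed by `QEAIdx m ℓ`,
realized as the space of `k`-valued functions on the (finite) index set. -/
abbrev QEASpace (k : Type*) [Field k] (m ℓ : ℕ) := QEAIdx m ℓ → k

/-- The operator `x_i` on `W`: `x_i (e_{(a,b)}) = e_{(a+ε_i,b)}` if `a_i ≤ ℓ−2`, and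
`x_i (e_{(a,b)}) = 0` if `a_i = ℓ−1`.  (In coordinates, `(x_i f)(a,b) = f(a−ε_i,b)` when
`a_i ≥ 1` and `0` otherwise.) -/
def qeaX (k : Type*) [Field k] (m ℓ : ℕ) [NeZero ℓ] (i : Fin m) :
    Module.End k (QEASpace k m ℓ) where
  toFun f := fun p =>
    if 1 ≤ (p.1 i).val then f (Function.update p.1 i (p.1 i - 1), p.2) else 0
  map_add' f g := by
    funext p; by_cases h : 1 ≤ (p.1 i).val <;> simp [h]
  map_smul' c f := by
    funext p; by_cases h : 1 ≤ (p.1 i).val <;> simp [h]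

/-- The operator `γ_i` on `W`: `γ_i (e_{(a,b)}) = q^{a_i} · e_{(a, b+ε_i)}`, where the
addition `b + ε_i` is taken modulo `ℓ`.  (In coordinates,
`(γ_i f)(a,b) = q^{a_i} · f(a, b−ε_i)` with subtraction mod `ℓ`.) -/
def qeaG (k : Type*) [Field k] (q : k) (m ℓ : ℕ) [NeZero ℓ] (i : Fin m) :
    Module.End k (QEASpace k m ℓ) where
  toFun f := fun p => q ^ (p.1 i).val * f (p.1, Function.update p.2 i (p.2 i - 1))
  map_add' f g := by funext p; simp [mul_add]
  map_smul' c f := by funext p; simp; ring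

/-- The operator `h_j = γ_1 ∘ ⋯ ∘ γ_{j−1}` (so `h_1 = id`). -/
noncomputable def qeaH (k : Type*) [Field k] (q : k) (m ℓ : ℕ) [NeZero ℓ] (j : Fin m) :
    Module.End k (QEASpace k m ℓ) :=
  (List.ofFn fun i : Fin m => if i < j then qeaG k q m ℓ i else 1).prod

open Fin.NatCast

section QEA
variable {k : Type*} [Field k] {ℓ : ℕ} [NeZero ℓ] (q : k) {m : ℕ}

lemma qeaX_apply (i : Fin m) (f : QEASpace k m ℓ) (p : QEAIdx m ℓ) :
    qeaX k m ℓ i f p =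
      if 1 ≤ (p.1 i).val then f (Function.update p.1 i (p.1 i - 1), p.2) else 0 := rfl

lemma qeaG_apply (i : Fin m) (f : QEASpace k m ℓ) (p : QEAIdx m ℓ) :
    qeaG k q m ℓ i f p = q ^ (p.1 i).val * f (p.1, Function.update p.2 i (p.2 i - 1)) := rfl

lemma fin_val_one' (h2 : 2 ≤ ℓ) : (1 : Fin ℓ).val = 1 := by
  rw [Fin.val_one']; exact Nat.mod_eq_of_lt (by omega)

lemma fin_sub_one_val (x : Fin ℓ) (h : 1 ≤ x.val) : (x - 1).val = x.val - 1 := by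
  have h2 : 2 ≤ ℓ := by have := x.isLt; omega
  rw [Fin.coe_sub_iff_le.2, fin_val_one' h2]
  rw [Fin.le_def, fin_val_one' h2]; exact h

lemma qeaG_qeaX_comm (i j : Fin m) (h : j ≠ i) :
    qeaG k q m ℓ j * qeaX k m ℓ i = qeaX k m ℓ i * qeaG k q m ℓ j := by
  refine LinearMap.ext fun f => funext fun p => ?_
  simp only [Module.End.mul_apply, qeaX_apply, qeaG_apply]
  by_cases hi : 1 ≤ (p.1 i).val
  · simp [hi, Function.update_of_ne h, Function.update_of_ne h.symm]
  · simp [hi, Function.update_of_ne h]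

lemma qeaG_qeaX_self (i : Fin m) :
    qeaG k q m ℓ i * qeaX k m ℓ i = q • (qeaX k m ℓ i * qeaG k q m ℓ i) := by
  refine LinearMap.ext fun f => funext fun p => ?_
  simp only [LinearMap.smul_apply, Pi.smul_apply, smul_eq_mul, Module.End.mul_apply,
    qeaX_apply, qeaG_apply]
  by_cases hi : 1 ≤ (p.1 i).val
  · simp only [hi, if_true, Function.update_self, fin_sub_one_val _ hi]
    rw [← mul_assoc, ← pow_succ']
    congr 2
    omega
  · simp [hi]

lemma qeaG_qeaG_comm (i j : Fin m) :
    qeaG k q m ℓ i * qeaG k q m ℓ j = qeaG k q m ℓ j * qeaG k q m ℓ i := by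
  rcases eq_or_ne i j with rfl | h
  · rfl
  · refine LinearMap.ext fun f => funext fun p => ?_
    simp only [Module.End.mul_apply, qeaG_apply, Function.update_of_ne h,
      Function.update_of_ne h.symm]
    rw [Function.update_comm h]
    ring

lemma qeaX_qeaX_comm (i j : Fin m) :
    qeaX k m ℓ i * qeaX k m ℓ j = qeaX k m ℓ j * qeaX k m ℓ i := by
  rcases eq_or_ne i j with rfl | h
  · rfl
  · refine LinearMap.ext fun f => funext fun p => ?_
    simp only [Module.End.mul_apply, qeaX_apply]
    by_cases hi : 1 ≤ (p.1 i).val <;> by_cases hj : 1 ≤ (p.1 j).val <;>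
      simp [hi, hj, Function.update_of_ne h, Function.update_of_ne h.symm,
        Function.update_comm h]

lemma qeaX_pow_apply (i : Fin m) (s : ℕ) (f : QEASpace k m ℓ) (p : QEAIdx m ℓ) :
    (qeaX k m ℓ i ^ s) f p =
      if s ≤ (p.1 i).val then f (Function.update p.1 i (p.1 i - (s : Fin ℓ)), p.2) else 0 := by
  induction s generalizing p with
  | zero => simp
  | succ n ih =>
    rw [pow_succ', Module.End.mul_apply, qeaX_apply]
    by_cases hi : 1 ≤ (p.1 i).val
    · rw [if_pos hi, ih]
      have hv : (p.1 i - 1).val = (p.1 i).val - 1 := fin_sub_one_val _ hi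
      by_cases hn : n + 1 ≤ (p.1 i).val
      · rw [if_pos (by simp [hv]; omega), if_pos hn]
        congr 1
        simp only [Function.update_self, Function.update_idem]
        congr 1
        push_cast
        abel
      · rw [if_neg (by simp [hv]; omega), if_neg hn]
    · rw [if_neg hi, if_neg (by omega)]

lemma qeaX_pow_ell (i : Fin m) : qeaX k m ℓ i ^ ℓ = 0 := by
  refine LinearMap.ext fun f => funext fun p => ?_
  show (qeaX k m ℓ i ^ ℓ) f p = 0
  rw [qeaX_pow_apply, if_neg (by have := (p.1 i).isLt; omega)]

end QEA

noncomputable def pprod {M : Type*} [Monoid M] (g : ℕ → M) : ℕ → M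
  | 0 => 1
  | t + 1 => pprod g t * g t

lemma ofFn_if_prod {M : Type*} [Monoid M] (n : ℕ) (g : ℕ → M) :
    ∀ jv : ℕ, jv ≤ n →
      (List.ofFn fun i : Fin n => if i.1 < jv then g i.1 else 1).prod = pprod g jv := by
  induction n with
  | zero => intro jv h; interval_cases jv; simp [pprod]
  | succ n ih =>
    intro jv h
    rw [List.ofFn_succ', List.concat_eq_append, List.prod_append, List.prod_singleton]
    simp only [Fin.coe_castSucc, Fin.val_last]
    rcases Nat.lt_or_ge jv (n + 1) with h' | h'
    · rw [if_neg (by omega), mul_one, ih jv (by omega)]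
    · have hj : jv = n + 1 := by omega
      subst hj
      rw [if_pos (by omega)]
      have he : (List.ofFn fun i : Fin n => if i.1 < n + 1 then g i.1 else 1)
          = List.ofFn fun i : Fin n => if i.1 < n then g i.1 else 1 := by
        congr 1
        funext i
        rw [if_pos (by omega), if_pos i.isLt]
      rw [he, ih n le_rfl]
      rfl

/-- the sequence of `γ` operators, extended by `1`. -/
noncomputable def gseq (k : Type*) [Field k] (q : k) (m ℓ : ℕ) [NeZero ℓ] : ℕ →
    Module.End k (QEASpace k m ℓ) := fun t =>
  if h : t < m then qeaG k q m ℓ ⟨t, h⟩ else 1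

section QEA2
variable {k : Type*} [Field k] {ℓ : ℕ} [NeZero ℓ] (q : k) {m : ℕ}

lemma qeaH_eq (j : Fin m) :
    qeaH k q m ℓ j = pprod (gseq k q m ℓ) j.1 := by
  rw [qeaH, ← ofFn_if_prod m (gseq k q m ℓ) j.1 j.isLt.le]
  have he : (fun i : Fin m => if i < j then qeaG k q m ℓ i else 1)
      = fun i : Fin m => if i.1 < j.1 then gseq k q m ℓ i.1 else 1 := by
    funext i
    by_cases h : (i : ℕ) < (j : ℕ)
    · rw [if_pos (by exact h), if_pos h, gseq, dif_pos i.isLt]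
    · rw [if_neg (by exact h), if_neg h]
  rw [he]

lemma gseq_qeaG_comm (t : ℕ) (i : Fin m) :
    gseq k q m ℓ t * qeaG k q m ℓ i = qeaG k q m ℓ i * gseq k q m ℓ t := by
  rw [gseq]
  split
  · exact qeaG_qeaG_comm q _ i
  · rw [one_mul, mul_one]

lemma pprod_qeaG_comm (t : ℕ) (i : Fin m) :
    pprod (gseq k q m ℓ) t * qeaG k q m ℓ i
      = qeaG k q m ℓ i * pprod (gseq k q m ℓ) t := by
  induction t with
  | zero => rw [pprod, one_mul, mul_one]
  | succ n ih =>
    rw [pprod, mul_assoc, gseq_qeaG_comm, ← mul_assoc, ih, mul_assoc]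

lemma pprod_pprod_comm (t s : ℕ) :
    pprod (gseq k q m ℓ) t * pprod (gseq k q m ℓ) s
      = pprod (gseq k q m ℓ) s * pprod (gseq k q m ℓ) t := by
  induction s with
  | zero => rw [pprod, one_mul, mul_one]
  | succ n ih =>
    rw [pprod, ← mul_assoc, ih, mul_assoc, mul_assoc]
    congr 1
    rw [gseq]
    split
    · rw [pprod_qeaG_comm]
    · rw [one_mul, mul_one]

lemma pprod_qeaX (t : ℕ) (i : Fin m) :
    pprod (gseq k q m ℓ) t * qeaX k m ℓ i =
      if (i : ℕ) < t then q • (qeaX k m ℓ i * pprod (gseq k q m ℓ) t)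
      else qeaX k m ℓ i * pprod (gseq k q m ℓ) t := by
  induction t with
  | zero => rw [if_neg (by omega), pprod, one_mul, mul_one]
  | succ n ih =>
    have hstep : gseq k q m ℓ n * qeaX k m ℓ i =
        if (i : ℕ) = n then q • (qeaX k m ℓ i * gseq k q m ℓ n)
        else qeaX k m ℓ i * gseq k q m ℓ n := by
      rw [gseq]
      split
      · rename_i hn
        by_cases he : (i : ℕ) = n
        · have : (⟨n, hn⟩ : Fin m) = i := by exact Fin.ext he.symm
          rw [this, if_pos he]
          exact qeaG_qeaX_self q i
        · rw [if_neg he]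
          exact qeaG_qeaX_comm q i ⟨n, hn⟩ (by simp [Fin.ext_iff]; omega)
      · rw [if_neg (by omega), one_mul, mul_one]
    rw [pprod, mul_assoc, hstep]
    by_cases he : (i : ℕ) = n
    · rw [if_pos he, if_pos (by omega), mul_smul_comm, ← mul_assoc, ih,
        if_neg (by omega), mul_assoc]
    · rw [if_neg he, ← mul_assoc, ih]
      by_cases hlt : (i : ℕ) < n
      · rw [if_pos hlt, if_pos (by omega), smul_mul_assoc, mul_assoc]
      · rw [if_neg hlt, if_neg (by omega), mul_assoc]

lemma qeaH_qeaX_comm_self (i : Fin m) :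
    qeaH k q m ℓ i * qeaX k m ℓ i = qeaX k m ℓ i * qeaH k q m ℓ i := by
  rw [qeaH_eq, pprod_qeaX, if_neg (by omega)]

lemma aux_qcomm {R : Type*} (q : k) [Ring R] [Algebra k R] (A B Hi Hj : R)
    (h1 : Hj * A = q • (A * Hj)) (h2 : Hi * B = B * Hi) (h3 : Hi * Hj = Hj * Hi)
    (h4 : A * B = B * A) : B * Hj * (A * Hi) = q • (A * Hi * (B * Hj)) := by
  rw [mul_assoc B Hj (A * Hi), ← mul_assoc Hj A Hi, h1, smul_mul_assoc, mul_smul_comm,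
    mul_assoc A Hj Hi, ← h3, ← mul_assoc B A, ← h4, ← mul_assoc (A * B) Hi Hj,
    mul_assoc A B Hi, ← h2, ← mul_assoc A Hi B, mul_assoc (A * Hi) B Hj]

lemma qeaXH_q_comm {i j : Fin m} (hij : i < j) :
    (qeaX k m ℓ j * qeaH k q m ℓ j) * (qeaX k m ℓ i * qeaH k q m ℓ i)
      = q • ((qeaX k m ℓ i * qeaH k q m ℓ i) * (qeaX k m ℓ j * qeaH k q m ℓ j)) := by
  rw [qeaH_eq, qeaH_eq]
  refine aux_qcomm q _ _ _ _ ?_ ?_ ?_ ?_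
  · rw [pprod_qeaX, if_pos (by exact hij)]
  · rw [pprod_qeaX, if_neg (by omega)]
  · exact pprod_pprod_comm q _ _
  · exact qeaX_qeaX_comm i j

lemma qeaXH_pow_ell (i : Fin m) :
    (qeaX k m ℓ i * qeaH k q m ℓ i) ^ ℓ = 0 := by
  have hc : Commute (qeaX k m ℓ i) (qeaH k q m ℓ i) :=
    (qeaH_qeaX_comm_self q i).symm
  rw [hc.mul_pow, qeaX_pow_ell, zero_mul]

end QEA2

section QBinom
variable {k : Type*} [Field k] (q : k)

/-- q-integer `[s] = 1 + q + ... + q^{s-1}`. -/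
def qint (s : ℕ) : k := ∑ i ∈ Finset.range s, q ^ i

/-- Gaussian binomial coefficients via the q-Pascal recursion. -/
def qbinom : ℕ → ℕ → k
  | 0, 0 => 1
  | 0, _ + 1 => 0
  | _ + 1, 0 => 1
  | n + 1, j + 1 => qbinom n j + q ^ (j + 1) * qbinom n (j + 1)

@[simp] lemma qint_zero : qint q 0 = 0 := by simp [qint]

@[simp] lemma qint_one : qint q 1 = 1 := by simp [qint]

lemma qint_add (a b : ℕ) : qint q (a + b) = qint q a + q ^ a * qint q b := by
  rw [qint, qint, qint, Finset.sum_range_add]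
  simp [pow_add, Finset.mul_sum]

@[simp] lemma qbinom_zero_right (n : ℕ) : qbinom q n 0 = 1 := by
  cases n <;> rfl

lemma qbinom_succ_succ (n j : ℕ) :
    qbinom q (n + 1) (j + 1) = qbinom q n j + q ^ (j + 1) * qbinom q n (j + 1) := rfl

lemma qbinom_eq_zero : ∀ n j : ℕ, n < j → qbinom q n j = 0 := by
  intro n
  induction n with
  | zero => intro j h; rcases j with _ | j; · omega
            · rfl
  | succ n ih =>
    intro j h
    rcases j with _ | j
    · omega
    · rw [qbinom_succ_succ, ih _ (by omega), ih _ (by omega)]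
      ring

lemma qbinom_diag : ∀ n : ℕ, qbinom q n n = 1 := by
  intro n
  induction n with
  | zero => rfl
  | succ n ih => rw [qbinom_succ_succ, ih, qbinom_eq_zero q n (n+1) (by omega)]; ring

lemma qbinom_J : ∀ n j : ℕ,
    qint q (n + 1 - j) * qbinom q (n + 1) j = qint q (n + 1) * qbinom q n j := by
  intro n
  induction n with
  | zero =>
    intro j
    rcases j with _ | _ | j
    · simp
    · simp [qbinom_succ_succ, qbinom]
    · rw [qbinom_eq_zero q 0 (j+2) (by omega), qbinom_eq_zero q 1 (j+2) (by omega)]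
      ring
  | succ n ih =>
    intro j
    rcases j with _ | t
    · simp
    · by_cases ht : t ≤ n
      · have e1 := ih t
        have e2 := ih (t + 1)
        rw [show n + 1 - (t + 1) = n - t from by omega, qbinom_succ_succ q n t] at e2
        have h1 : qint q (n + 1 - t) = qint q (n - t) + q ^ (n - t) := by
          rw [show n + 1 - t = (n - t) + 1 from by omega, qint_add, qint_one, mul_one]
        have h2 : qint q (n + 2) = qint q (n + 1) + q ^ (n + 1) := by
          rw [show n + 2 = (n + 1) + 1 from rfl, qint_add, qint_one, mul_one]
        have h3 : q ^ (t + 1) * q ^ (n - t) = q ^ (n + 1) := by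
          rw [← pow_add]; congr 1; omega
        rw [h1] at e1
        rw [show n + 1 + 1 - (t + 1) = n + 1 - t from by omega, h1, h2,
          qbinom_succ_succ q (n+1) t, qbinom_succ_succ q n t]
        linear_combination e1 + q ^ (t + 1) * e2 +
          (qbinom q n t + q ^ (t + 1) * qbinom q n (t + 1)) * h3
      · rw [show n + 1 + 1 - (t + 1) = 0 from by omega, qint_zero, zero_mul,
          qbinom_eq_zero q (n+1) (t+1) (by omega), mul_zero]

lemma qbinom_I : ∀ n j : ℕ,
    qint q (j + 1) * qbinom q (n + 1) (j + 1) = qint q (n + 1) * qbinom q n j := by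
  intro n
  induction n with
  | zero =>
    intro j
    rcases j with _ | j
    · simp [qbinom_succ_succ, qbinom]
    · rw [qbinom_eq_zero q 0 (j+1) (by omega), qbinom_eq_zero q 1 (j+2) (by omega)]
      ring
  | succ n ih =>
    intro j
    by_cases hj : j ≤ n + 1
    · have e1 := ih j
      have e2 := qbinom_J q n j
      have h2 : qint q (n + 2) = qint q (j + 1) + q ^ (j + 1) * qint q (n + 1 - j) := by
        rw [← qint_add]; congr 1; omega
      rw [qbinom_succ_succ q (n+1) j, h2] at *
      linear_combination q ^ (j + 1) * e1 - q ^ (j + 1) * e2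
    · rw [qbinom_eq_zero q (n+2) (j+1) (by omega), qbinom_eq_zero q (n+1) j (by omega)]
      ring

end QBinom
section QBinom2
variable {k : Type*} [Field k] {q : k} {ℓ : ℕ}

lemma qint_ne_zero (hq' : ∀ s : ℕ, 0 < s → s < ℓ → q ^ s ≠ 1) (hℓ2 : 2 ≤ ℓ)
    {j : ℕ} (h0 : 0 < j) (h1 : j < ℓ) : qint q j ≠ 0 := by
  intro h
  have hgs : (q - 1) * qint q j = q ^ j - 1 := by
    rw [qint, mul_comm, geom_sum_mul]
  rw [h, mul_zero] at hgs
  exact hq' j h0 h1 (eq_of_sub_eq_zero hgs.symm)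

lemma qint_ell_zero (hq : q ^ ℓ = 1) (hq' : ∀ s : ℕ, 0 < s → s < ℓ → q ^ s ≠ 1)
    (hℓ2 : 2 ≤ ℓ) : qint q ℓ = 0 := by
  have hq1 : q ≠ 1 := by
    intro h
    exact hq' 1 (by omega) (by omega) (by rw [h, one_pow])
  have hgs : (q - 1) * qint q ℓ = q ^ ℓ - 1 := by
    rw [qint, mul_comm, geom_sum_mul]
  rw [hq, sub_self] at hgs
  exact (mul_eq_zero.1 hgs).resolve_left (sub_ne_zero.2 hq1)

lemma qbinom_ell_zero (hq : q ^ ℓ = 1) (hq' : ∀ s : ℕ, 0 < s → s < ℓ → q ^ s ≠ 1)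
    (hℓ2 : 2 ≤ ℓ) {j : ℕ} (h0 : 0 < j) (h1 : j < ℓ) : qbinom q ℓ j = 0 := by
  obtain ⟨n, rfl⟩ : ∃ n, ℓ = n + 1 := ⟨ℓ - 1, by omega⟩
  obtain ⟨t, rfl⟩ : ∃ t, j = t + 1 := ⟨j - 1, by omega⟩
  have hI := qbinom_I q n t
  rw [qint_ell_zero hq hq' hℓ2, zero_mul] at hI
  have hnz := qint_ne_zero hq' hℓ2 (j := t + 1) (by omega) h1
  exact (mul_eq_zero.1 hI).resolve_left hnz

end QBinom2

section QPow
variable {k : Type*} [Field k] (q : k) {R : Type*} [Ring R] [Algebra k R]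

lemma qpow_comm {a b : R} (h : b * a = q • (a * b)) (s : ℕ) :
    b * a ^ s = q ^ s • (a ^ s * b) := by
  induction s with
  | zero => simp
  | succ n ih =>
    rw [pow_succ', ← mul_assoc, h, smul_mul_assoc, mul_assoc, ih, mul_smul_comm,
      ← smul_assoc, smul_eq_mul, ← pow_succ', ← mul_assoc, ← pow_succ']

lemma q_add_pow {a b : R} (h : b * a = q • (a * b)) (n : ℕ) :
    (a + b) ^ n = ∑ j ∈ Finset.range (n + 1), qbinom q n j • (a ^ j * b ^ (n - j)) := by
  induction n with
  | zero => simp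
  | succ n ih =>
    rw [pow_succ', ih, Finset.mul_sum]
    have hterm : ∀ j, (a + b) * (qbinom q n j • (a ^ j * b ^ (n - j)))
        = qbinom q n j • (a ^ (j + 1) * b ^ (n - j))
          + (q ^ j * qbinom q n j) • (a ^ j * b ^ (n - j + 1)) := by
      intro j
      rw [add_mul, mul_smul_comm, mul_smul_comm]
      congr 1
      · rw [← mul_assoc, ← pow_succ']
      · rw [← mul_assoc, qpow_comm q h j, smul_mul_assoc, mul_assoc, ← pow_succ',
          smul_smul, mul_comm (qbinom q n j) (q ^ j)]
    rw [Finset.sum_congr rfl fun j _ => hterm j, Finset.sum_add_distrib]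
    -- RHS: peel off the j = 0 term
    rw [Finset.sum_range_succ' (fun s => qbinom q (n+1) s • (a ^ s * b ^ (n + 1 - s))) (n + 1)]
    simp only [Nat.succ_sub_succ, qbinom_zero_right, pow_zero, one_mul, Nat.sub_zero, one_smul]
    -- LHS second sum: peel off j = 0, and extend top
    rw [Finset.sum_range_succ' (fun j => (q ^ j * qbinom q n j) • (a ^ j * b ^ (n - j + 1))) n]
    simp only [pow_zero, qbinom_zero_right, mul_one, one_mul, Nat.sub_zero, one_smul]
    have hext : ∑ t ∈ Finset.range n, (q ^ (t+1) * qbinom q n (t+1)) • (a ^ (t+1) * b ^ (n - (t+1) + 1))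
        = ∑ t ∈ Finset.range (n+1), (q ^ (t+1) * qbinom q n (t+1)) • (a ^ (t+1) * b ^ (n - (t+1) + 1)) := by
      rw [Finset.sum_range_succ, qbinom_eq_zero q n (n+1) (by omega)]
      simp
    rw [hext]
    have hps : ∀ t ∈ Finset.range (n+1), qbinom q (n+1) (t+1) • (a ^ (t+1) * b ^ (n - t))
        = qbinom q n t • (a ^ (t+1) * b ^ (n - t))
          + (q ^ (t+1) * qbinom q n (t+1)) • (a ^ (t+1) * b ^ (n - (t+1) + 1)) := by
      intro t ht
      rw [Finset.mem_range] at ht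
      rcases Nat.lt_or_ge t n with h' | h'
      · rw [qbinom_succ_succ, add_smul, show n - (t+1) + 1 = n - t from by omega]
      · have : t = n := by omega
        subst this
        rw [qbinom_succ_succ, qbinom_diag, qbinom_eq_zero q t (t+1) (by omega)]
        simp
    rw [Finset.sum_congr rfl hps, Finset.sum_add_distrib]
    abel
end QPow
section Grading
variable {k : Type*} [Field k] {ℓ : ℕ} [NeZero ℓ] (q : k) {m : ℕ}

lemma pprod_apply (t : ℕ) (ht : t ≤ m) (f : QEASpace k m ℓ) (p : QEAIdx m ℓ) :
    pprod (gseq k q m ℓ) t f p =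
      q ^ (∑ s ∈ Finset.univ.filter (fun s : Fin m => s.1 < t), (p.1 s).val) *
        f (p.1, fun r => if r.1 < t then p.2 r - 1 else p.2 r) := by
  induction t generalizing f p with
  | zero =>
    have h1 : (Finset.univ.filter (fun s : Fin m => s.1 < 0)) = ∅ := by
      ext s; simp
    rw [pprod, h1]
    simp
  | succ t ih =>
    have ht' : t < m := ht
    rw [pprod, Module.End.mul_apply, ih (le_of_lt ht'), gseq, dif_pos ht', qeaG_apply]
    rw [← mul_assoc, ← pow_add]
    have hsum : (Finset.univ.filter (fun s : Fin m => s.1 < t + 1))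
        = insert (⟨t, ht'⟩ : Fin m) (Finset.univ.filter (fun s : Fin m => s.1 < t)) := by
      ext s
      simp only [Finset.mem_filter, Finset.mem_univ, true_and, Finset.mem_insert, Fin.ext_iff]
      omega
    rw [hsum, Finset.sum_insert (by simp)]
    congr 2
    · ring_nf
    · rw [Prod.mk.injEq]
      refine ⟨rfl, ?_⟩
      funext r
      by_cases hr : r = ⟨t, ht'⟩
      · subst hr
        simp only [Function.update_self]
        rw [if_neg (by simp), if_pos (by simp)]
      · rw [Function.update_of_ne hr]
        show (if (r : ℕ) < t then p.2 r - 1 else p.2 r)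
            = if (r : ℕ) < t + 1 then p.2 r - 1 else p.2 r
        have : r.1 ≠ t := fun hc => hr (Fin.ext hc)
        by_cases h2 : r.1 < t
        · rw [if_pos h2, if_pos (by omega)]
        · rw [if_neg h2, if_neg (by omega)]

lemma XX_apply (i : Fin m) (f : QEASpace k m ℓ) (p : QEAIdx m ℓ) :
    (qeaX k m ℓ i * qeaH k q m ℓ i) f p =
      if 1 ≤ (p.1 i).val then
        q ^ (∑ s ∈ Finset.univ.filter (fun s : Fin m => s.1 < i.1), (p.1 s).val) *
          f (Function.update p.1 i (p.1 i - 1), fun r => if r.1 < i.1 then p.2 r - 1 else p.2 r)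
      else 0 := by
  rw [Module.End.mul_apply, qeaX_apply]
  by_cases h : 1 ≤ (p.1 i).val
  · rw [if_pos h, if_pos h, qeaH_eq, pprod_apply q i.1 i.isLt.le]
    congr 2
    refine Finset.sum_congr rfl fun s hs => ?_
    rw [Finset.mem_filter] at hs
    show ((Function.update p.1 i (p.1 i - 1)) s).val = (p.1 s).val
    rw [Function.update_of_ne (fun hc => by rw [hc] at hs; exact absurd hs.2 (lt_irrefl _))]
  · rw [if_neg h, if_neg h]

variable {q}

/-- vanishing in `i0`-degrees `≥ d`. -/
def ZDeg (i0 : Fin m) (d : ℕ) (f : QEASpace k m ℓ) : Prop :=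
  ∀ p : QEAIdx m ℓ, d ≤ (p.1 i0).val → f p = 0

lemma ZDeg_XX_ne {i0 i : Fin m} (hne : i ≠ i0) {d : ℕ} {f : QEASpace k m ℓ}
    (hf : ZDeg i0 d f) : ZDeg i0 d ((qeaX k m ℓ i * qeaH k q m ℓ i) f) := by
  intro p hp
  rw [XX_apply]
  by_cases h : 1 ≤ (p.1 i).val
  · have hd : d ≤ ((Function.update p.1 i (p.1 i - 1)) i0).val := by
      rw [Function.update_of_ne hne.symm]; exact hp
    rw [if_pos h, hf _ hd, mul_zero]
  · rw [if_neg h]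

lemma ZDeg_XX_self {i0 : Fin m} {d : ℕ} {f : QEASpace k m ℓ}
    (hf : ZDeg i0 d f) : ZDeg i0 (d + 1) ((qeaX k m ℓ i0 * qeaH k q m ℓ i0) f) := by
  intro p hp
  rw [XX_apply]
  by_cases h : 1 ≤ (p.1 i0).val
  · rw [if_pos h]
    have : d ≤ ((Function.update p.1 i0 (p.1 i0 - 1)) i0).val := by
      rw [Function.update_self, fin_sub_one_val _ h]
      omega
    rw [hf _ this, mul_zero]
  · rw [if_neg h]
end Grading
section TauGrading
variable {k : Type*} [Field k] (q : k) {ℓ : ℕ} [NeZero ℓ] {m : ℕ} (lam : Fin m → k)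

/-- The operator `τ_λ`. -/
noncomputable def tauOp : Module.End k (QEASpace k m ℓ) :=
  ∑ i, lam i • (qeaX k m ℓ i * qeaH k q m ℓ i)

lemma tauOp_apply (f : QEASpace k m ℓ) (p : QEAIdx m ℓ) :
    tauOp q lam f p = ∑ i, lam i * ((qeaX k m ℓ i * qeaH k q m ℓ i) f p) := by
  rw [tauOp, LinearMap.sum_apply, Finset.sum_apply]
  refine Finset.sum_congr rfl fun i _ => ?_
  rw [LinearMap.smul_apply, Pi.smul_apply, smul_eq_mul]

variable {lam}

lemma ZDeg_tau {i0 : Fin m} {d : ℕ} {f : QEASpace k m ℓ} (hf : ZDeg i0 d f) :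
    ZDeg i0 (d + 1) (tauOp q lam f) := by
  intro p hp
  rw [tauOp_apply]
  refine Finset.sum_eq_zero fun i _ => ?_
  rcases eq_or_ne i i0 with rfl | hne
  · rw [ZDeg_XX_self hf p hp, mul_zero]
  · rw [ZDeg_XX_ne hne hf p (by omega), mul_zero]

lemma ZDeg_tau_pow {i0 : Fin m} {f : QEASpace k m ℓ} (hf : ZDeg i0 1 f) (s : ℕ) :
    ZDeg i0 (s + 1) (((tauOp q lam (ℓ := ℓ)) ^ s) f) := by
  induction s with
  | zero => rw [pow_zero]; exact hf
  | succ s ih => rw [pow_succ', Module.End.mul_apply]; exact ZDeg_tau q ih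

lemma tau_top_eq {i0 : Fin m} {f : QEASpace k m ℓ} (hf : ZDeg i0 1 f) :
    ∀ s (p : QEAIdx m ℓ), (p.1 i0).val = s →
      (((tauOp q lam (ℓ := ℓ)) ^ s) f) p
        = (((lam i0 • (qeaX k m ℓ i0 * qeaH k q m ℓ i0)) ^ s)) f p := by
  intro s
  induction s with
  | zero => intro p _; rw [pow_zero, pow_zero]
  | succ s ih =>
    intro p hp
    rw [pow_succ', Module.End.mul_apply, tauOp_apply]
    have hZ : ZDeg i0 (s + 1) (((tauOp q lam (ℓ := ℓ)) ^ s) f) := ZDeg_tau_pow q hf s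
    rw [Finset.sum_eq_single i0 (fun i _ hne => by
        rw [ZDeg_XX_ne hne hZ p (by omega), mul_zero])
      (fun h => absurd (Finset.mem_univ i0) h)]
    have hg : 1 ≤ (p.1 i0).val := by omega
    rw [XX_apply, if_pos hg]
    have hdeg : ((Function.update p.1 i0 (p.1 i0 - 1)) i0).val = s := by
      rw [Function.update_self, fin_sub_one_val _ hg]; omega
    rw [ih _ hdeg]
    -- now compute the RHS
    rw [pow_succ', Module.End.mul_apply, LinearMap.smul_apply, Pi.smul_apply, smul_eq_mul,
      XX_apply, if_pos hg]
end TauGrading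

section NPow
variable {k : Type*} [Field k] (q : k) {ℓ : ℕ} [NeZero ℓ] {m : ℕ} (lam : Fin m → k)

lemma NN_pow_apply (i0 : Fin m) (f : QEASpace k m ℓ) :
    ∀ s (p : QEAIdx m ℓ), s ≤ (p.1 i0).val →
      (((lam i0 • (qeaX k m ℓ i0 * qeaH k q m ℓ i0)) ^ s)) f p
        = (lam i0 * q ^ (∑ s' ∈ Finset.univ.filter (fun s' : Fin m => s'.1 < i0.1),
            (p.1 s').val)) ^ s
          * f (Function.update p.1 i0 (p.1 i0 - (s : Fin ℓ)),
              fun r => if r.1 < i0.1 then p.2 r - (s : Fin ℓ) else p.2 r) := by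
  intro s
  induction s with
  | zero =>
    intro p _
    rw [pow_zero, pow_zero, one_mul, Module.End.one_apply]
    congr 1
    rw [Prod.mk.injEq]
    constructor
    · rw [Nat.cast_zero, sub_zero, Function.update_eq_self]
    · funext r
      rw [Nat.cast_zero, sub_zero]
      split <;> rfl
  | succ s ih =>
    intro p hp
    have hg : 1 ≤ (p.1 i0).val := by omega
    rw [pow_succ', Module.End.mul_apply, LinearMap.smul_apply, Pi.smul_apply, smul_eq_mul,
      XX_apply, if_pos hg]
    set p₁ : QEAIdx m ℓ :=
      (Function.update p.1 i0 (p.1 i0 - 1),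
        fun r => if r.1 < i0.1 then p.2 r - 1 else p.2 r) with hp₁
    have hdeg : (p₁.1 i0).val = (p.1 i0).val - 1 := by
      show ((Function.update p.1 i0 (p.1 i0 - 1)) i0).val = _
      rw [Function.update_self, fin_sub_one_val _ hg]
    rw [ih p₁ (by omega)]
    have hc : (∑ s' ∈ Finset.univ.filter (fun s' : Fin m => s'.1 < i0.1), (p₁.1 s').val)
        = ∑ s' ∈ Finset.univ.filter (fun s' : Fin m => s'.1 < i0.1), (p.1 s').val := by
      refine Finset.sum_congr rfl fun s' hs' => ?_
      rw [Finset.mem_filter] at hs'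
      have : s' ≠ i0 := fun hc => by rw [hc] at hs'; exact absurd hs'.2 (lt_irrefl _)
      show ((Function.update p.1 i0 (p.1 i0 - 1)) s').val = (p.1 s').val
      rw [Function.update_of_ne this]
    rw [hc]
    have hpt : (Function.update p₁.1 i0 (p₁.1 i0 - (s : Fin ℓ)),
          fun r => if r.1 < i0.1 then p₁.2 r - (s : Fin ℓ) else p₁.2 r)
        = (Function.update p.1 i0 (p.1 i0 - ((s+1 : ℕ) : Fin ℓ)),
          fun r => if r.1 < i0.1 then p.2 r - ((s+1 : ℕ) : Fin ℓ) else p.2 r) := by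
      rw [Prod.mk.injEq]
      constructor
      · show Function.update (Function.update p.1 i0 (p.1 i0 - 1)) i0
            ((Function.update p.1 i0 (p.1 i0 - 1)) i0 - (s : Fin ℓ)) = _
        rw [Function.update_self, Function.update_idem, sub_sub]
        congr 2
        push_cast
        abel
      · funext r
        by_cases hri : r.1 < i0.1
        · rw [if_pos hri, if_pos hri]
          show (if r.1 < i0.1 then p.2 r - 1 else p.2 r) - (s : Fin ℓ) = _
          rw [if_pos hri, sub_sub]
          congr 1
          push_cast
          abel
        · rw [if_neg hri, if_neg hri]
          show (if r.1 < i0.1 then p.2 r - 1 else p.2 r) = p.2 r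
          rw [if_neg hri]
    rw [hpt]
    rw [← mul_assoc, ← mul_assoc]
    congr 2
    rw [pow_succ]
    ring
end NPow
section TauNilpotent
variable {k : Type*} [Field k] {q : k} {ℓ : ℕ} [NeZero ℓ]

lemma sum_pow_ell {R : Type*} [Ring R] [Algebra k R]
    (hq : q ^ ℓ = 1) (hq' : ∀ s : ℕ, 0 < s → s < ℓ → q ^ s ≠ 1) (hℓ2 : 2 ≤ ℓ)
    {ι : Type*} [LinearOrder ι] [DecidableEq ι] (s : Finset ι) (F : ι → R)
    (hcomm : ∀ i j, i < j → F j * F i = q • (F i * F j)) (hnil : ∀ i, F i ^ ℓ = 0) :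
    (∑ i ∈ s, F i) ^ ℓ = 0 := by
  induction s using Finset.induction_on_max with
  | empty => rw [Finset.sum_empty, zero_pow (by omega)]
  | insert a s ha ih =>
    rw [Finset.sum_insert (fun hc => absurd (ha a hc) (lt_irrefl a)), add_comm]
    have hBA : F a * (∑ i ∈ s, F i) = q • ((∑ i ∈ s, F i) * F a) := by
      rw [Finset.mul_sum, Finset.sum_mul, Finset.smul_sum]
      exact Finset.sum_congr rfl fun i hi => hcomm i a (ha i hi)
    rw [q_add_pow q hBA ℓ]
    refine Finset.sum_eq_zero fun j hj => ?_
    rw [Finset.mem_range] at hj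
    rcases Nat.eq_zero_or_pos j with rfl | hj0
    · rw [pow_zero, one_mul, Nat.sub_zero, hnil a, smul_zero]
    · rcases Nat.lt_or_ge j ℓ with hjl | hjl
      · rw [qbinom_ell_zero hq hq' hℓ2 hj0 hjl, zero_smul]
      · have hje : j = ℓ := by omega
        subst hje
        rw [ih, zero_mul, smul_zero]

variable {m : ℕ} {lam : Fin m → k}

lemma tau_pow_ell (hq : q ^ ℓ = 1) (hq' : ∀ s : ℕ, 0 < s → s < ℓ → q ^ s ≠ 1)
    (hℓ2 : 2 ≤ ℓ) : (tauOp q lam (ℓ := ℓ)) ^ ℓ = 0 := by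
  rw [tauOp]
  refine sum_pow_ell hq hq' hℓ2 _ _ (fun i j hij => ?_) (fun i => ?_)
  · calc lam j • (qeaX k m ℓ j * qeaH k q m ℓ j) * (lam i • (qeaX k m ℓ i * qeaH k q m ℓ i))
        = ((lam j * lam i) * q) •
            ((qeaX k m ℓ i * qeaH k q m ℓ i) * (qeaX k m ℓ j * qeaH k q m ℓ j)) := by
          rw [smul_mul_assoc, mul_smul_comm, smul_smul, qeaXH_q_comm q hij, smul_smul]
      _ = q • (lam i • (qeaX k m ℓ i * qeaH k q m ℓ i)
            * (lam j • (qeaX k m ℓ j * qeaH k q m ℓ j))) := by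
          rw [smul_mul_assoc, mul_smul_comm, smul_smul, smul_smul]
          congr 1
          ring
  · rw [smul_pow, qeaXH_pow_ell, smul_zero]
end TauNilpotent

section Iota
variable (k : Type*) [Field k] (m ℓ : ℕ) [NeZero ℓ]

/-- extension by zero from the degree-zero slice. -/
noncomputable def iotaMap (i0 : Fin m) :
    ({p : QEAIdx m ℓ // p.1 i0 = 0} → k) →ₗ[k] QEASpace k m ℓ where
  toFun g := fun p => if h : p.1 i0 = 0 then g ⟨p, h⟩ else 0
  map_add' g g' := by funext p; by_cases h : p.1 i0 = 0 <;> simp [h]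
  map_smul' c g := by funext p; by_cases h : p.1 i0 = 0 <;> simp [h]

variable {k m ℓ}

lemma iota_ZDeg (i0 : Fin m) (g : {p : QEAIdx m ℓ // p.1 i0 = 0} → k) :
    ZDeg i0 1 (iotaMap k m ℓ i0 g) := by
  intro p hp
  show (if h : p.1 i0 = 0 then g ⟨p, h⟩ else 0) = 0
  rw [dif_neg fun h => by rw [h, Fin.val_zero] at hp; omega]

variable {q : k}

lemma comp_injective (i0 : Fin m) (hq : q ^ ℓ = 1) (hℓ2 : 2 ≤ ℓ) {lam : Fin m → k}
    (hlam0 : lam i0 ≠ 0) :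
    Function.Injective
      (((tauOp q lam (ℓ := ℓ)) ^ (ℓ - 1)) ∘ₗ iotaMap k m ℓ i0) := by
  rw [← LinearMap.ker_eq_bot]
  rw [LinearMap.ker_eq_bot']
  intro g hg
  funext x
  set c : Fin ℓ := ((ℓ - 1 : ℕ) : Fin ℓ) with hc
  have htF : c.val = ℓ - 1 := by
    rw [hc, Fin.val_natCast, Nat.mod_eq_of_lt (by omega)]
  set p : QEAIdx m ℓ :=
    (Function.update x.1.1 i0 c, fun r => if r.1 < i0.1 then x.1.2 r + c else x.1.2 r)
      with hpdef
  have hdeg : (p.1 i0).val = ℓ - 1 := by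
    show ((Function.update x.1.1 i0 c) i0).val = ℓ - 1
    rw [Function.update_self, htF]
  have h1 : (((tauOp q lam (ℓ := ℓ)) ^ (ℓ - 1)) (iotaMap k m ℓ i0 g)) p = 0 := by
    have := congrFun (congrArg (fun u => (u : QEASpace k m ℓ)) hg) p
    simpa using this
  rw [tau_top_eq q (iota_ZDeg i0 g) (ℓ - 1) p hdeg,
    NN_pow_apply q lam i0 _ (ℓ - 1) p (by omega)] at h1
  have hpt : (Function.update p.1 i0 (p.1 i0 - ((ℓ - 1 : ℕ) : Fin ℓ)),
        fun r => if r.1 < i0.1 then p.2 r - ((ℓ - 1 : ℕ) : Fin ℓ) else p.2 r) = x.1 := by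
    rw [Prod.mk.injEq]
    constructor
    · show Function.update (Function.update x.1.1 i0 c) i0
          ((Function.update x.1.1 i0 c) i0 - c) = x.1.1
      rw [Function.update_self, Function.update_idem, sub_self]
      have h0 : Function.update x.1.1 i0 (0 : Fin ℓ) = Function.update x.1.1 i0 (x.1.1 i0) := by
        rw [x.2]
      rw [h0, Function.update_eq_self]
    · funext r
      by_cases hri : r.1 < i0.1
      · rw [if_pos hri]
        show (if r.1 < i0.1 then x.1.2 r + c else x.1.2 r) - c = x.1.2 r
        rw [if_pos hri, add_sub_cancel_right]
      · rw [if_neg hri]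
        show (if r.1 < i0.1 then x.1.2 r + c else x.1.2 r) = x.1.2 r
        rw [if_neg hri]
  rw [hpt] at h1
  have hiota : iotaMap k m ℓ i0 g x.1 = g x := by
    show (if h : x.1.1 i0 = 0 then g ⟨x.1, h⟩ else 0) = g x
    rw [dif_pos x.2]
  rw [hiota] at h1
  have hqne : q ≠ 0 := by
    intro h0
    rw [h0, zero_pow (by omega)] at hq
    exact zero_ne_one hq
  have hsc : (lam i0 * q ^ (∑ s' ∈ Finset.univ.filter (fun s' : Fin m => s'.1 < i0.1),
      (p.1 s').val)) ^ (ℓ - 1) ≠ 0 :=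
    pow_ne_zero _ (mul_ne_zero hlam0 (pow_ne_zero _ hqne))
  exact (mul_eq_zero.1 h1).resolve_left hsc

lemma card_slice (i0 : Fin m) (hm : 0 < m) :
    Fintype.card {p : QEAIdx m ℓ // p.1 i0 = 0} = ℓ ^ (2 * m - 1) := by
  have hE : QEAIdx m ℓ ≃ {p : QEAIdx m ℓ // p.1 i0 = 0} × Fin ℓ :=
    { toFun := fun p => (⟨(Function.update p.1 i0 0, p.2), Function.update_self _ _ _⟩, p.1 i0)
      invFun := fun w => (Function.update w.1.1.1 i0 w.2, w.1.1.2)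
      left_inv := fun p => by
        show (Function.update (Function.update p.1 i0 0) i0 (p.1 i0), p.2) = p
        rw [Function.update_idem, Function.update_eq_self]
      right_inv := fun w => by
        rcases w with ⟨⟨⟨a, b⟩, hab⟩, v⟩
        rw [Prod.mk.injEq]
        constructor
        · apply Subtype.ext
          rw [Prod.mk.injEq]
          constructor
          · show Function.update (Function.update a i0 v) i0 0 = a
            rw [Function.update_idem]
            conv_lhs => rw [show (0 : Fin ℓ) = a i0 from hab.symm]
            exact Function.update_eq_self _ _
          · rfl
        · exact Function.update_self _ _ _ }
  have hcard := Fintype.card_congr hE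
  simp only [Fintype.card_prod, Fintype.card_fun, Fintype.card_fin] at hcard
  have hpos : 0 < ℓ := Nat.pos_of_ne_zero (NeZero.ne ℓ)
  have key : Fintype.card {p : QEAIdx m ℓ // p.1 i0 = 0} * ℓ = ℓ ^ (2 * m - 1) * ℓ := by
    rw [← hcard, ← pow_add, ← pow_succ]
    congr 1
    omega
  exact Nat.eq_of_mul_eq_mul_right hpos key
end Iota
section NilpotentRank
variable {K : Type*} [Field K] {V : Type*} [AddCommGroup V] [Module K V]
  [FiniteDimensional K V]

open Module LinearMap

lemma range_pow_le_ker {f : Module.End K V} {ℓ : ℕ} (hℓ : 1 ≤ ℓ) (hf : f ^ ℓ = 0) :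
    LinearMap.range (f ^ (ℓ - 1)) ≤ LinearMap.ker f := by
  rw [LinearMap.range_le_ker_iff, ← Module.End.mul_eq_comp, ← pow_succ']
  rw [show ℓ - 1 + 1 = ℓ from by omega]
  exact hf

lemma step_rank (f : Module.End K V) {ℓ : ℕ} (hf : f ^ ℓ = 0) {s : ℕ} (hs : s + 1 ≤ ℓ) :
    finrank K (LinearMap.range (f ^ (s + 1))) + finrank K (LinearMap.range (f ^ (ℓ - 1)))
      ≤ finrank K (LinearMap.range (f ^ s)) := by
  set W := LinearMap.range (f ^ s)
  set φ : W →ₗ[K] V := f ∘ₗ W.subtype with hφ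
  have hrange : LinearMap.range φ = LinearMap.range (f ^ (s + 1)) := by
    rw [hφ, LinearMap.range_comp, Submodule.range_subtype, pow_succ', Module.End.mul_eq_comp,
      LinearMap.range_comp]
  have hker : LinearMap.ker φ = Submodule.comap W.subtype (LinearMap.ker f) :=
    LinearMap.ker_comp _ _
  have hkerrank : finrank K (LinearMap.ker φ)
      = finrank K ((W ⊓ LinearMap.ker f : Submodule K V)) := by
    rw [hker, ← Submodule.map_comap_subtype]
    exact (Submodule.equivMapOfInjective _ (Submodule.injective_subtype _) _).finrank_eq
  have hle : LinearMap.range (f ^ (ℓ - 1)) ≤ W ⊓ LinearMap.ker f := by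
    refine le_inf ?_ (range_pow_le_ker (by omega) hf)
    rw [show ℓ - 1 = s + (ℓ - 1 - s) from by omega, pow_add, Module.End.mul_eq_comp,
      LinearMap.range_comp]
    exact LinearMap.map_le_range
  have hrn := LinearMap.finrank_range_add_finrank_ker φ
  rw [hrange, hkerrank] at hrn
  have hmono : finrank K (LinearMap.range (f ^ (ℓ - 1)))
      ≤ finrank K ((W ⊓ LinearMap.ker f : Submodule K V)) := Submodule.finrank_mono hle
  have hWr : finrank K W = finrank K (LinearMap.range (f ^ s)) := rfl
  omega

lemma nilpotent_ker_rank (f : Module.End K V) {ℓ K0 : ℕ} (hℓ2 : 2 ≤ ℓ)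
    (hf : f ^ ℓ = 0) (hbot : K0 ≤ finrank K (LinearMap.range (f ^ (ℓ - 1))))
    (hdim : finrank K V = ℓ * K0) : finrank K (LinearMap.ker f) = K0 := by
  set R := finrank K (LinearMap.range (f ^ (ℓ - 1))) with hR
  have chain : ∀ t, t ≤ ℓ → t * R ≤ finrank K (LinearMap.range (f ^ (ℓ - t))) := by
    intro t
    induction t with
    | zero => intro _; simp
    | succ t ih =>
      intro ht
      have h1 := step_rank f hf (s := ℓ - (t + 1)) (by omega)
      rw [show ℓ - (t + 1) + 1 = ℓ - t from by omega] at h1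
      have h2 := ih (by omega)
      calc (t + 1) * R = t * R + R := by ring
        _ ≤ finrank K (LinearMap.range (f ^ (ℓ - t))) + R := by omega
        _ ≤ finrank K (LinearMap.range (f ^ (ℓ - (t + 1)))) := h1
  have hV : ℓ * R ≤ finrank K V := by
    have := chain ℓ le_rfl
    rw [Nat.sub_self, pow_zero] at this
    have h1 : LinearMap.range (1 : Module.End K V) = ⊤ := LinearMap.range_eq_top.2
      (fun v => ⟨v, rfl⟩)
    rw [h1, finrank_top] at this
    exact this
  have hRK : R = K0 := by
    have h2 : ℓ * R ≤ ℓ * K0 := by rw [← hdim]; exact hV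
    have h3 : R ≤ K0 := Nat.le_of_mul_le_mul_left h2 (by omega)
    omega
  have hrank1 : (ℓ - 1) * K0 ≤ finrank K (LinearMap.range f) := by
    have := chain (ℓ - 1) (by omega)
    rw [show ℓ - (ℓ - 1) = 1 from by omega, pow_one, hRK] at this
    exact this
  have hker_ge : K0 ≤ finrank K (LinearMap.ker f) := by
    refine le_trans (le_of_eq hRK.symm) ?_
    rw [hR]
    exact Submodule.finrank_mono (range_pow_le_ker (by omega) hf)
  have hrn := LinearMap.finrank_range_add_finrank_ker f
  rw [hdim] at hrn
  have hsplit : ℓ * K0 = (ℓ - 1) * K0 + K0 := by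
    rw [Nat.sub_mul, one_mul]
    omega
  omega

end NilpotentRank

/-- **Lemma 2.2 (freeness over a cyclic shifted subalgebra).**  For every nonzero
`λ = (λ_1,…,λ_m) ∈ k^m`, the operator `τ_λ = λ_1 (x_1 ∘ h_1) + ⋯ + λ_m (x_m ∘ h_m)` on the
regular representation `W` of `A = Λ ⋊ G` satisfies `dim_k ker τ_λ = ℓ^{2m−1}`;
equivalently, `W` is free of rank `ℓ^{2m−1}` over `k[t]/(t^ℓ)` with `t` acting as `τ_λ`. -/
theorem statement3 {k : Type*} [Field k] {ℓ : ℕ} (hℓ : 2 ≤ ℓ) [NeZero ℓ] {q : k}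
    (hq : q ^ ℓ = 1) (hq' : ∀ s : ℕ, 0 < s → s < ℓ → q ^ s ≠ 1)
    {m : ℕ} (hm : 0 < m) (lam : Fin m → k) (hlam : lam ≠ 0) :
    Module.finrank k
        (LinearMap.ker (∑ i, lam i • (qeaX k m ℓ i * qeaH k q m ℓ i))) = ℓ ^ (2 * m - 1) := by

  obtain ⟨i0, hi0⟩ := Function.ne_iff.1 hlam
  rw [show (∑ i, lam i • (qeaX k m ℓ i * qeaH k q m ℓ i)) = tauOp q lam from rfl]
  have hi0' : lam i0 ≠ 0 := hi0
  have hf : (tauOp q lam (ℓ := ℓ)) ^ ℓ = 0 := tau_pow_ell hq hq' hℓ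
  have hdim : Module.finrank k (QEASpace k m ℓ) = ℓ * ℓ ^ (2 * m - 1) := by
    rw [Module.finrank_fintype_fun_eq_card, Fintype.card_prod, Fintype.card_fun,
      Fintype.card_fin, Fintype.card_fin, ← pow_add, ← pow_succ']
    congr 1
    omega
  have hbot : ℓ ^ (2 * m - 1)
      ≤ Module.finrank k (LinearMap.range ((tauOp q lam (ℓ := ℓ)) ^ (ℓ - 1))) := by
    have hinj := comp_injective i0 hq hℓ hi0'
    have h1 := LinearMap.finrank_range_of_inj hinj
    rw [Module.finrank_fintype_fun_eq_card, card_slice i0 hm] at h1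
    rw [← h1]
    refine Submodule.finrank_mono ?_
    rw [LinearMap.range_comp]
    exact LinearMap.map_le_range
  exact nilpotent_ker_rank _ hℓ hf hbot hdim
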